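/- Let x ∈ ℝ^N be nonzero with support T and |T| = k, and set ν_min(x) := (min_{i∈T} |x_i|)/‖x‖₂. Let κ > 0 and μ ∈ (0,1), and let (x̂^l)_{l≥0} be a sequence of k-sparse vectors in ℝ^N satisfying ‖x − x̂^l‖₂ ≤ κ·μ^l·‖x‖₂ for every l ≥ 0. Define ℓ_max := ⌈(log ν_min(x) − log κ)/log μ⌉ + 1. Then for every integer l ≥ ℓ_max the support of x̂^l equals T. -/

import Mathlib

open Finset Matrix

noncomputable def euclidNorm {α : Type*} [Fintype α] (v : α → ℝ) : ℝ :=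
  Real.sqrt (∑ i, (v i) ^ 2)

def restr {N : ℕ} (I : Finset (Fin N)) (x : Fin N → ℝ) : Fin N → ℝ :=
  fun i => if i ∈ I then x i else 0

def sparse {N : ℕ} (k : ℕ) (x : Fin N → ℝ) : Prop :=
  (Finset.univ.filter fun i => x i ≠ 0).card ≤ k

def aRIP {n N : ℕ} (A : Matrix (Fin n) (Fin N) ℝ) (m : ℕ) (L U : ℝ) : Prop :=
  ∀ x : Fin N → ℝ, sparse m x →
    (1 - L) * euclidNorm x ^ 2 ≤ euclidNorm (A.mulVec x) ^ 2 ∧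
      euclidNorm (A.mulVec x) ^ 2 ≤ (1 + U) * euclidNorm x ^ 2

def selects {N : ℕ} (T : Finset (Fin N)) (v : Fin N → ℝ) : Prop :=
  ∀ i ∈ T, ∀ j ∉ T, |v j| ≤ |v i|

def subCols {n N : ℕ} (A : Matrix (Fin n) (Fin N) ℝ) (I : Finset (Fin N)) :
    Matrix (Fin n) I ℝ :=
  fun r c => A r (c : Fin N)

noncomputable def gram {n N : ℕ} (A : Matrix (Fin n) (Fin N) ℝ) (I : Finset (Fin N)) :
    Matrix I I ℝ :=
  (subCols A I)ᵀ * subCols A I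

noncomputable def pinvApply {n N : ℕ} (A : Matrix (Fin n) (Fin N) ℝ) (I : Finset (Fin N))
    (y : Fin n → ℝ) : I → ℝ :=
  ((gram A I)⁻¹ * (subCols A I)ᵀ).mulVec y

noncomputable def pinvVec {n N : ℕ} (A : Matrix (Fin n) (Fin N) ℝ) (I : Finset (Fin N))
    (y : Fin n → ℝ) : Fin N → ℝ :=
  fun i => if h : i ∈ I then pinvApply A I y ⟨i, h⟩ else 0

theorem stmt6 {N k : ℕ} (x : Fin N → ℝ) (hx : x ≠ 0)
    (T : Finset (Fin N)) (hT : ∀ i, i ∈ T ↔ x i ≠ 0) (hTcard : T.card = k)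
    (κ μ : ℝ) (hκ : 0 < κ) (hμ0 : 0 < μ) (hμ1 : μ < 1)
    (xh : ℕ → Fin N → ℝ) (hsp : ∀ l, sparse k (xh l))
    (hbd : ∀ l : ℕ, euclidNorm (fun i => x i - xh l i) ≤ κ * μ ^ l * euclidNorm x) :
    ∀ l : ℕ,
      (⌈(Real.log ((⨅ i : T, |x i.1|) / euclidNorm x) - Real.log κ) / Real.log μ⌉ + 1 : ℤ)
        ≤ (l : ℤ) →
      ∀ i, xh l i ≠ 0 ↔ i ∈ T := by
  -- T is nonempty
  obtain ⟨i₀, hi₀⟩ : ∃ i, x i ≠ 0 := by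
    by_contra h
    push_neg at h
    exact hx (funext fun i => h i)
  have hi₀T : i₀ ∈ T := (hT i₀).2 hi₀
  haveI : Nonempty T := ⟨⟨i₀, hi₀T⟩⟩
  set ν : ℝ := ⨅ i : T, |x i.1| with hν
  have hνle : ∀ i ∈ T, ν ≤ |x i| := fun i hi =>
    ciInf_le (Finite.bddBelow_range _) (⟨i, hi⟩ : T)
  have hνpos : 0 < ν := by
    obtain ⟨j, hj⟩ := Finite.exists_min (fun i : T => |x i.1|)
    have : ν = |x j.1| := le_antisymm (hνle _ j.2) (le_ciInf hj)
    rw [this]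
    exact abs_pos.2 ((hT j.1).1 j.2)
  -- enorm x > 0
  have hEpos : 0 < euclidNorm x := by
    have hsum : 0 < ∑ i, (x i) ^ 2 := by
      apply Finset.sum_pos' (fun i _ => sq_nonneg _)
      exact ⟨i₀, Finset.mem_univ _, by positivity⟩
    exact Real.sqrt_pos.2 hsum
  intro l hl i
  -- key: κ * μ ^ l < ν / enorm x
  have hlogμ : Real.log μ < 0 := Real.log_neg hμ0 hμ1
  have hc : (Real.log (ν / euclidNorm x) - Real.log κ) / Real.log μ < (l : ℝ) := by
    have h1 : (⌈(Real.log (ν / euclidNorm x) - Real.log κ) / Real.log μ⌉ : ℤ) < (l : ℤ) := by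
      omega
    calc (Real.log (ν / euclidNorm x) - Real.log κ) / Real.log μ
        ≤ (⌈(Real.log (ν / euclidNorm x) - Real.log κ) / Real.log μ⌉ : ℝ) := Int.le_ceil _
      _ < (l : ℝ) := by exact_mod_cast h1
  have hkey : κ * μ ^ l < ν / euclidNorm x := by
    have h2 : (l : ℝ) * Real.log μ < Real.log (ν / euclidNorm x) - Real.log κ := by
      have := mul_lt_mul_of_neg_right hc hlogμ
      rwa [div_mul_cancel₀ _ (ne_of_lt hlogμ)] at this
    have h3 : Real.log (κ * μ ^ l) < Real.log (ν / euclidNorm x) := by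
      rw [Real.log_mul (ne_of_gt hκ) (by positivity), Real.log_pow]
      linarith
    have hpos1 : 0 < κ * μ ^ l := by positivity
    have hpos2 : 0 < ν / euclidNorm x := by positivity
    calc κ * μ ^ l = Real.exp (Real.log (κ * μ ^ l)) := (Real.exp_log hpos1).symm
      _ < Real.exp (Real.log (ν / euclidNorm x)) := Real.exp_lt_exp.2 h3
      _ = ν / euclidNorm x := Real.exp_log hpos2
  have herr : euclidNorm (fun j => x j - xh l j) < ν := by
    calc euclidNorm (fun j => x j - xh l j) ≤ κ * μ ^ l * euclidNorm x := hbd l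
      _ < (ν / euclidNorm x) * euclidNorm x := by
          exact mul_lt_mul_of_pos_right hkey hEpos
      _ = ν := div_mul_cancel₀ _ (ne_of_gt hEpos)
  -- pointwise bound
  have hpt : ∀ j, |x j - xh l j| ≤ euclidNorm (fun j => x j - xh l j) := by
    intro j
    have : (x j - xh l j) ^ 2 ≤ ∑ i, (x i - xh l i) ^ 2 :=
      Finset.single_le_sum (f := fun i => (x i - xh l i) ^ 2)
        (fun i _ => sq_nonneg _) (Finset.mem_univ j)
    calc |x j - xh l j| = Real.sqrt ((x j - xh l j) ^ 2) := (Real.sqrt_sq_eq_abs _).symm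
      _ ≤ euclidNorm (fun j => x j - xh l j) := Real.sqrt_le_sqrt this
  -- T ⊆ support of xh l
  have hsub : T ⊆ Finset.univ.filter fun j => xh l j ≠ 0 := by
    intro j hj
    simp only [Finset.mem_filter, Finset.mem_univ, true_and]
    intro hzero
    have : |x j| < ν := by
      have := lt_of_le_of_lt (hpt j) herr
      rwa [hzero, sub_zero] at this
    exact absurd (hνle j hj) (not_le.2 this)
  have hcard : (Finset.univ.filter fun j => xh l j ≠ 0).card ≤ T.card := by
    have := hsp l
    unfold sparse at this
    omega
  have heq : (Finset.univ.filter fun j => xh l j ≠ 0) = T :=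
    (Finset.eq_of_subset_of_card_le hsub hcard).symm
  constructor
  · intro hne
    rw [← heq]
    simp [hne]
  · intro hiT
    have : i ∈ Finset.univ.filter fun j => xh l j ≠ 0 := heq ▸ hiT
    simpa using this
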